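/- Fix a dimension p ≥ 1, τ² > 0, β > 0, σ² ≥ 0, and points s₁, s₂ ∈ ℝ^p. Let u₁, u₂ be independent p-dimensional Gaussian random vectors each distributed N(0, σ² I_p). Then E[τ² exp(−β‖(s₁+u₁) − (s₂+u₂)‖²)] = (τ²/(1+4βσ²)^{p/2}) · exp(−β‖s₁−s₂‖²/(1+4βσ²)). -/

import Mathlib

open MeasureTheory ProbabilityTheory

open Real
open scoped ENNReal NNReal

lemma gauss_exp_integral (a : ℝ) (ha : 0 < a) (v : NNReal) (c : ℝ) :
    ∫ z, Real.exp (-(a * (z + c) ^ 2)) ∂(gaussianReal 0 v)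
      = Real.exp (-(a * c ^ 2) / (1 + 2 * a * v)) / Real.sqrt (1 + 2 * a * v) := by
  rcases eq_or_ne v 0 with hv | hv
  · subst hv; simp
  · have hv' : (0:ℝ) < v := lt_of_le_of_ne v.coe_nonneg (by exact_mod_cast (Ne.symm hv))
    have hS : (0:ℝ) < 1 + 2 * a * v := by positivity
    set A : ℝ := a + 1 / (2 * v) with hA
    have hA0 : (0:ℝ) < A := by positivity
    set m : ℝ := a * c / A with hm
    set K : ℝ := a * c ^ 2 / (1 + 2 * a * v) with hK
    rw [gaussianReal_of_var_ne_zero _ hv]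
    rw [show gaussianPDF 0 v = fun x => ((gaussianPDFReal 0 v x).toNNReal : ℝ≥0∞) from rfl]
    rw [integral_withDensity_eq_integral_smul
      ((measurable_gaussianPDFReal 0 v).real_toNNReal) _]
    have hpt : ∀ z : ℝ, (gaussianPDFReal 0 v z).toNNReal • Real.exp (-(a * (z + c) ^ 2))
        = (Real.sqrt (2 * π * v))⁻¹ * Real.exp (-K) * Real.exp (-(A * (z + m) ^ 2)) := by
      intro z
      rw [NNReal.smul_def, smul_eq_mul, Real.coe_toNNReal _ (gaussianPDFReal_nonneg 0 v z)]
      rw [gaussianPDFReal]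
      have hmerge : ∀ x y : ℝ, (√(2 * π * ↑v))⁻¹ * Real.exp x * Real.exp y
          = (√(2 * π * ↑v))⁻¹ * Real.exp (x + y) := fun x y => by
        rw [mul_assoc, ← Real.exp_add]
      rw [hmerge, hmerge]
      have hexp : -(z - 0) ^ 2 / (2 * (v:ℝ)) + -(a * (z + c) ^ 2)
          = -K + -(A * (z + m) ^ 2) := by
        have h2v : (2:ℝ) * v ≠ 0 := by positivity
        rw [hm, hK, hA]
        field_simp [hm, hK, hA]
        ring
      rw [hexp]
    simp_rw [hpt]
    rw [integral_const_mul]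
    have hshift : ∫ z : ℝ, Real.exp (-(A * (z + m) ^ 2))
        = ∫ z : ℝ, Real.exp (-(A * z ^ 2)) :=
      integral_add_right_eq_self (fun z => Real.exp (-(A * z ^ 2))) m
    rw [hshift]
    have : ∫ z : ℝ, Real.exp (-(A * z ^ 2)) = Real.sqrt (π / A) := by
      simp_rw [neg_mul_eq_neg_mul]
      exact integral_gaussian A
    rw [this]
    have hπA : π / A = (2 * π * ↑v) / (1 + 2 * a * ↑v) := by
      rw [hA]; field_simp; ring
    rw [hπA, Real.sqrt_div (by positivity : (0:ℝ) ≤ 2 * π * ↑v)]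
    have h0 : Real.sqrt (2 * π * ↑v) ≠ 0 := by positivity
    have h1 : Real.sqrt (1 + 2 * a * ↑v) ≠ 0 := by positivity
    rw [hK]
    field_simp

lemma integral_pi_prod {p : ℕ} (γ : Measure ℝ) [SigmaFinite γ] (f : Fin p → ℝ → ℝ) :
    ∫ x : Fin p → ℝ, ∏ i, f i (x i) ∂(Measure.pi fun _ => γ) = ∏ i, ∫ x, f i x ∂γ := by
  letI : MeasureSpace ℝ := ⟨γ⟩
  exact MeasureTheory.integral_fintype_prod_volume_eq_prod (ι := Fin p) f

/-- **Equation (7): the induced squared-exponential covariance.** If `u₁, u₂` are independent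
`N(0, σ²I_p)` Gaussian vectors in `ℝ^p`, then
`E[τ² exp(-β‖(s₁+u₁)-(s₂+u₂)‖²)] = (τ²/(1+4βσ²)^(p/2)) exp(-β‖s₁-s₂‖²/(1+4βσ²))`. -/
theorem induced_sqexp_covariance
    (p : ℕ) (hp : 1 ≤ p) (τ2 β : ℝ) (hτ : 0 < τ2) (hβ : 0 < β) (σ2 : NNReal)
    (s₁ s₂ : Fin p → ℝ)
    (μ : Measure (Fin p → ℝ)) (hμ : μ = Measure.pi fun _ => gaussianReal 0 σ2) :
    ∫ u : (Fin p → ℝ) × (Fin p → ℝ),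
        τ2 * Real.exp (-β * ∑ i, ((s₁ i + u.1 i) - (s₂ i + u.2 i)) ^ 2) ∂(μ.prod μ)
      = τ2 / (1 + 4 * β * (σ2 : ℝ)) ^ ((p : ℝ) / 2)
          * Real.exp (-β * (∑ i, (s₁ i - s₂ i) ^ 2) / (1 + 4 * β * (σ2 : ℝ))) := by
  subst hμ
  have hv : (0:ℝ) ≤ (σ2:ℝ) := σ2.coe_nonneg
  set v : ℝ := (σ2 : ℝ) with hvdef
  set d : Fin p → ℝ := fun i => s₁ i - s₂ i with hd
  have hS1 : (0:ℝ) < 1 + 2 * β * v := by positivity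
  have hS2 : (0:ℝ) < 1 + 4 * β * v := by positivity
  set β' : ℝ := β / (1 + 2 * β * v) with hβ'
  have hβ'0 : 0 < β' := by positivity
  have hF : ∀ u : (Fin p → ℝ) × (Fin p → ℝ),
      τ2 * Real.exp (-β * ∑ i, ((s₁ i + u.1 i) - (s₂ i + u.2 i)) ^ 2)
        = τ2 * ∏ i, Real.exp (-(β * (u.2 i + -(d i + u.1 i)) ^ 2)) := by
    intro u
    rw [← Real.exp_sum]
    congr 1
    rw [neg_mul, Finset.mul_sum, ← Finset.sum_neg_distrib]
    congr 1
    exact Finset.sum_congr rfl fun i _ => by ring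
  simp_rw [hF]
  have hcont : Continuous fun u : (Fin p → ℝ) × (Fin p → ℝ) =>
      τ2 * ∏ i, Real.exp (-(β * (u.2 i + -(d i + u.1 i)) ^ 2)) := by
    refine continuous_const.mul (continuous_finset_prod _ fun i _ => ?_)
    fun_prop
  have hbnd : ∀ u : (Fin p → ℝ) × (Fin p → ℝ),
      ‖τ2 * ∏ i, Real.exp (-(β * (u.2 i + -(d i + u.1 i)) ^ 2))‖ ≤ τ2 := by
    intro u
    rw [Real.norm_eq_abs, abs_mul, abs_of_pos hτ]
    have h1 : |∏ i : Fin p, Real.exp (-(β * (u.2 i + -(d i + u.1 i)) ^ 2))| ≤ 1 := by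
      rw [abs_of_nonneg (Finset.prod_nonneg fun i _ => (Real.exp_pos _).le)]
      refine Finset.prod_le_one (fun i _ => (Real.exp_pos _).le) fun i _ => ?_
      rw [Real.exp_le_one_iff]
      have : (0:ℝ) ≤ β * (u.2 i + -(d i + u.1 i)) ^ 2 := by positivity
      linarith
    calc τ2 * |∏ i : Fin p, Real.exp (-(β * (u.2 i + -(d i + u.1 i)) ^ 2))|
        ≤ τ2 * 1 := by nlinarith
      _ = τ2 := mul_one τ2
  have hint : Integrable (fun u : (Fin p → ℝ) × (Fin p → ℝ) =>
      τ2 * ∏ i, Real.exp (-(β * (u.2 i + -(d i + u.1 i)) ^ 2)))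
      ((Measure.pi fun _ => gaussianReal 0 σ2).prod (Measure.pi fun _ => gaussianReal 0 σ2)) := by
    exact Integrable.mono' (integrable_const τ2) hcont.aestronglyMeasurable
      (Filter.Eventually.of_forall hbnd)
  rw [MeasureTheory.integral_prod _ hint]
  have hinner : ∀ x : Fin p → ℝ,
      (∫ y : Fin p → ℝ, τ2 * ∏ i, Real.exp (-(β * (y i + -(d i + x i)) ^ 2))
          ∂(Measure.pi fun _ => gaussianReal 0 σ2))
        = τ2 * ∏ i, ((Real.sqrt (1 + 2 * β * v))⁻¹
            * Real.exp (-(β' * (x i + d i) ^ 2))) := by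
    intro x
    rw [integral_const_mul,
      integral_pi_prod (γ := gaussianReal 0 σ2)
        (f := fun i y => Real.exp (-(β * (y + -(d i + x i)) ^ 2)))]
    congr 1
    refine Finset.prod_congr rfl fun i _ => ?_
    rw [gauss_exp_integral β hβ σ2 (-(d i + x i))]
    have he : -(β * (-(d i + x i)) ^ 2) / (1 + 2 * β * v) = -(β' * (x i + d i) ^ 2) := by
      rw [show (-(d i + x i)) ^ 2 = (x i + d i) ^ 2 from by ring, neg_div,
        mul_div_right_comm, ← hβ']
    rw [he, div_eq_mul_inv, mul_comm]
  simp_rw [hinner]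
  rw [integral_const_mul,
    integral_pi_prod (γ := gaussianReal 0 σ2)
      (f := fun i x => (Real.sqrt (1 + 2 * β * v))⁻¹ * Real.exp (-(β' * (x + d i) ^ 2)))]
  have hone : ∀ i : Fin p,
      (∫ x : ℝ, (Real.sqrt (1 + 2 * β * v))⁻¹ * Real.exp (-(β' * (x + d i) ^ 2))
          ∂(gaussianReal 0 σ2))
        = Real.exp (-(β * d i ^ 2) / (1 + 4 * β * v)) / Real.sqrt (1 + 4 * β * v) := by
    intro i
    rw [integral_const_mul, gauss_exp_integral β' hβ'0 σ2 (d i)]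
    have hS2' : (0:ℝ) < 1 + 2 * β' * v := by positivity
    have hKe : (1 + 2 * β * v) * (1 + 2 * β' * v) = 1 + 4 * β * v := by
      rw [hβ']; field_simp; ring
    have hfrac : -(β' * d i ^ 2) / (1 + 2 * β' * v) = -(β * d i ^ 2) / (1 + 4 * β * v) := by
      rw [← hKe, hβ']; field_simp
    rw [hfrac, ← hKe, Real.sqrt_mul hS1.le]
    field_simp
    rw [hvdef]; ring_nf
  simp_rw [hone]
  rw [Finset.prod_div_distrib, ← Real.exp_sum, Finset.prod_const, Finset.card_univ,
    Fintype.card_fin]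
  have hsum : ∑ i : Fin p, -(β * d i ^ 2) / (1 + 4 * β * v)
      = -β * (∑ i, d i ^ 2) / (1 + 4 * β * v) := by
    rw [← Finset.sum_div, neg_mul, Finset.mul_sum, ← Finset.sum_neg_distrib]
  rw [hsum]
  have hpow : (Real.sqrt (1 + 4 * β * v)) ^ p = (1 + 4 * β * v) ^ ((p:ℝ) / 2) := by
    rw [Real.sqrt_eq_rpow, ← Real.rpow_natCast ((1 + 4 * β * v) ^ ((1:ℝ)/2)) p,
      ← Real.rpow_mul hS2.le]
    congr 1
    ring
  rw [hpow, hd]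
  rw [div_eq_mul_inv, div_eq_mul_inv, div_eq_mul_inv]
  ring
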